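/- Let f, h ∈ ℂ[[x,y]] be nonzero formal power series, let λ ∈ ℝ≥0² be a vector with nonnegative coordinates, and let ξ > 0 be a rational number. Then the translated Newton polygon 𝒩(h) + λ is contained in the interior of the dilated Newton polygon ξ·𝒩(f) if and only if for every nonzero vector v ∈ ℝ≥0² one has ord_v(h) + ⟨v,λ⟩ > ξ·ord_v(f). -/

import Mathlib

open scoped Pointwise

noncomputable section

/-- The standard inner (dot) product on ℝ². -/
def dot2 (v u : ℝ × ℝ) : ℝ := v.1 * u.1 + v.2 * u.2

/-- The nonnegative quadrant ℝ≥0² in ℝ². -/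
def quadrant2 : Set (ℝ × ℝ) := {u | 0 ≤ u.1 ∧ 0 ≤ u.2}

/-- The support of a power series f ∈ ℂ[[x,y]], viewed as a subset of ℝ². -/
def psupp (f : MvPowerSeries (Fin 2) ℂ) : Set (ℝ × ℝ) :=
  {p | ∃ d : Fin 2 →₀ ℕ, MvPowerSeries.coeff d f ≠ 0 ∧ p = ((d 0 : ℝ), (d 1 : ℝ))}

/-- The Newton polygon 𝒩(f) = conv(supp f) + ℝ≥0². -/
def newtonPoly (f : MvPowerSeries (Fin 2) ℂ) : Set (ℝ × ℝ) :=
  convexHull ℝ (psupp f) + quadrant2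

/-- The support function Φ_{𝒩(f)}(v) = inf{⟨v,u⟩ : u ∈ 𝒩(f)}. -/
def suppFn (f : MvPowerSeries (Fin 2) ℂ) (v : ℝ × ℝ) : ℝ :=
  sInf (dot2 v '' newtonPoly f)

/-- The monomial order ord_v(f) = min{⟨v,d⟩ : d ∈ supp f}. -/
def ordV (v : ℝ × ℝ) (f : MvPowerSeries (Fin 2) ℂ) : ℝ :=
  sInf (dot2 v '' psupp f)

section helpers

lemma key_min (D : Set (ℕ × ℕ)) (hD : D.Nonempty) (a b : ℝ) (ha : 0 ≤ a) (hb : 0 ≤ b)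
    (hab : 0 < a ∨ 0 < b) :
    ∃ p ∈ D, ∀ q ∈ D, a * p.1 + b * p.2 ≤ a * q.1 + b * q.2 := by
  rcases ha.lt_or_eq with ha | ha
  · rcases hb.lt_or_eq with hb | hb
    · obtain ⟨p0, hp0⟩ := hD
      set B : ℝ := a * p0.1 + b * p0.2 with hB
      set M : ℕ := ⌈B / a⌉₊ ⊔ ⌈B / b⌉₊ with hM
      have bound : ∀ q ∈ D, a * q.1 + b * q.2 ≤ B → q.1 ≤ M ∧ q.2 ≤ M := by
        intro q _ hqB
        have hq2 : (0:ℝ) ≤ b * q.2 := mul_nonneg hb.le (Nat.cast_nonneg _)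
        have hq1 : (0:ℝ) ≤ a * q.1 := mul_nonneg ha.le (Nat.cast_nonneg _)
        constructor
        · have h1 : (q.1:ℝ) ≤ B / a := by rw [le_div_iff₀ ha]; nlinarith
          exact le_trans (Nat.cast_le.mp (h1.trans (Nat.le_ceil _))) (le_max_left _ _)
        · have h1 : (q.2:ℝ) ≤ B / b := by rw [le_div_iff₀ hb]; nlinarith
          exact le_trans (Nat.cast_le.mp (h1.trans (Nat.le_ceil _))) (le_max_right _ _)
      have hfin : (D ∩ {q | q.1 ≤ M ∧ q.2 ≤ M}).Finite := by
        apply Set.Finite.subset ((Set.finite_Iic M).prod (Set.finite_Iic M))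
        rintro q ⟨-, h1, h2⟩; exact ⟨h1, h2⟩
      have hne : (D ∩ {q | q.1 ≤ M ∧ q.2 ≤ M}).Nonempty :=
        ⟨p0, hp0, bound p0 hp0 le_rfl⟩
      obtain ⟨p, ⟨hpD, -⟩, hple⟩ :=
        Set.exists_min_image _ (fun q : ℕ × ℕ => a * q.1 + b * q.2) hfin hne
      refine ⟨p, hpD, fun q hq => ?_⟩
      by_cases hqB : a * q.1 + b * q.2 ≤ B
      · exact hple q ⟨hq, bound q hq hqB⟩
      · have := hple p0 ⟨hp0, bound p0 hp0 le_rfl⟩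
        push_neg at hqB; linarith
    · have hDne : (Prod.fst '' D).Nonempty := hD.image _
      obtain ⟨p, hpD, hpn⟩ := Nat.sInf_mem hDne
      refine ⟨p, hpD, fun q hq => ?_⟩
      have h1 : p.1 ≤ q.1 := hpn ▸ Nat.sInf_le ⟨q, hq, rfl⟩
      have : (p.1:ℝ) ≤ q.1 := Nat.cast_le.mpr h1
      rw [← hb]; ring_nf; nlinarith
  · have hb : 0 < b := hab.resolve_left (by rw [← ha]; exact lt_irrefl 0)
    have hDne : (Prod.snd '' D).Nonempty := hD.image _
    obtain ⟨p, hpD, hpn⟩ := Nat.sInf_mem hDne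
    refine ⟨p, hpD, fun q hq => ?_⟩
    have h1 : p.2 ≤ q.2 := hpn ▸ Nat.sInf_le ⟨q, hq, rfl⟩
    have : (p.2:ℝ) ≤ q.2 := Nat.cast_le.mpr h1
    rw [← ha]; ring_nf; nlinarith

lemma dot2_add_right (v a b : ℝ × ℝ) : dot2 v (a + b) = dot2 v a + dot2 v b := by
  simp [dot2]; ring

lemma dot2_smul_right (v : ℝ × ℝ) (c : ℝ) (a : ℝ × ℝ) : dot2 v (c • a) = c * dot2 v a := by
  simp [dot2, smul_eq_mul]; ring

lemma isLinearMap_dot2 (v : ℝ × ℝ) : IsLinearMap ℝ (dot2 v) :=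
  ⟨dot2_add_right v, fun c a => dot2_smul_right v c a⟩

lemma dot2_nonneg {v u : ℝ × ℝ} (hv : v ∈ quadrant2) (hu : u ∈ quadrant2) : 0 ≤ dot2 v u :=
  add_nonneg (mul_nonneg hv.1 hu.1) (mul_nonneg hv.2 hu.2)

lemma convex_quadrant2 : Convex ℝ quadrant2 := by
  intro x hx y hy a b ha hb _
  exact ⟨add_nonneg (mul_nonneg ha hx.1) (mul_nonneg hb hy.1),
    add_nonneg (mul_nonneg ha hx.2) (mul_nonneg hb hy.2)⟩

lemma quadrant2_add {q r : ℝ × ℝ} (hq : q ∈ quadrant2) (hr : r ∈ quadrant2) :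
    q + r ∈ quadrant2 :=
  ⟨add_nonneg hq.1 hr.1, add_nonneg hq.2 hr.2⟩

lemma quadrant2_smul {c : ℝ} (hc : 0 ≤ c) {q : ℝ × ℝ} (hq : q ∈ quadrant2) :
    c • q ∈ quadrant2 :=
  ⟨mul_nonneg hc hq.1, mul_nonneg hc hq.2⟩

lemma psupp_sub_quadrant (f : MvPowerSeries (Fin 2) ℂ) : psupp f ⊆ quadrant2 := by
  rintro p ⟨d, -, rfl⟩
  exact ⟨Nat.cast_nonneg _, Nat.cast_nonneg _⟩

lemma psupp_nonempty {f : MvPowerSeries (Fin 2) ℂ} (hf : f ≠ 0) : (psupp f).Nonempty := by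
  by_contra hcon
  apply hf
  ext d
  by_contra hd
  exact hcon ⟨_, d, by simpa using hd, rfl⟩

lemma quad_pos {v : ℝ × ℝ} (hv : v ∈ quadrant2) (hv0 : v ≠ 0) : 0 < v.1 ∨ 0 < v.2 := by
  by_contra hcon
  push_neg at hcon
  apply hv0
  have h1 : v.1 = 0 := le_antisymm hcon.1 hv.1
  have h2 : v.2 = 0 := le_antisymm hcon.2 hv.2
  exact Prod.ext h1 h2

lemma dot2_self_pos {v : ℝ × ℝ} (hv : v ∈ quadrant2) (hv0 : v ≠ 0) : 0 < dot2 v v := by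
  rcases quad_pos hv hv0 with h | h <;>
    · simp only [dot2]; nlinarith [mul_self_nonneg v.1, mul_self_nonneg v.2]

lemma psupp_min {f : MvPowerSeries (Fin 2) ℂ} (hf : f ≠ 0) {v : ℝ × ℝ}
    (hv : v ∈ quadrant2) (hv0 : v ≠ 0) :
    ∃ p ∈ psupp f, ∀ q ∈ psupp f, dot2 v p ≤ dot2 v q := by
  set D : Set (ℕ × ℕ) :=
    {mn | ∃ d : Fin 2 →₀ ℕ, MvPowerSeries.coeff d f ≠ 0 ∧ d 0 = mn.1 ∧ d 1 = mn.2} with hDdef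
  have hD : D.Nonempty := by
    obtain ⟨p, d, hd, rfl⟩ := psupp_nonempty hf
    exact ⟨(d 0, d 1), d, hd, rfl, rfl⟩
  obtain ⟨p, ⟨d, hd, h0, h1⟩, hmin⟩ := key_min D hD v.1 v.2 hv.1 hv.2 (quad_pos hv hv0)
  refine ⟨((d 0 : ℝ), (d 1 : ℝ)), ⟨d, hd, rfl⟩, ?_⟩
  rintro q ⟨e, he, rfl⟩
  have := hmin (e 0, e 1) ⟨e, he, rfl, rfl⟩
  simp only [dot2, h0, h1] at this ⊢
  exact this

lemma bdd_psupp (v : ℝ × ℝ) (hv : v ∈ quadrant2) (f : MvPowerSeries (Fin 2) ℂ) :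
    BddBelow (dot2 v '' psupp f) := by
  refine ⟨0, ?_⟩
  rintro _ ⟨p, hp, rfl⟩
  exact dot2_nonneg hv (psupp_sub_quadrant f hp)

lemma ordV_le {f : MvPowerSeries (Fin 2) ℂ} {v : ℝ × ℝ} (hv : v ∈ quadrant2)
    {p : ℝ × ℝ} (hp : p ∈ psupp f) : ordV v f ≤ dot2 v p :=
  csInf_le (bdd_psupp v hv f) ⟨p, hp, rfl⟩

lemma ordV_eq {f : MvPowerSeries (Fin 2) ℂ} {v : ℝ × ℝ} {p : ℝ × ℝ} (hp : p ∈ psupp f)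
    (hmin : ∀ q ∈ psupp f, dot2 v p ≤ dot2 v q) : ordV v f = dot2 v p :=
  IsLeast.csInf_eq ⟨⟨p, hp, rfl⟩, by rintro _ ⟨q, hq, rfl⟩; exact hmin q hq⟩

lemma ordV_le_newton {f : MvPowerSeries (Fin 2) ℂ} {v : ℝ × ℝ} (hv : v ∈ quadrant2)
    {u : ℝ × ℝ} (hu : u ∈ newtonPoly f) : ordV v f ≤ dot2 v u := by
  obtain ⟨c, hc, q, hq, rfl⟩ := Set.mem_add.mp hu
  have h1 : c ∈ {w : ℝ × ℝ | ordV v f ≤ dot2 v w} :=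
    convexHull_min (fun p hp => ordV_le hv hp)
      (convex_halfSpace_ge (isLinearMap_dot2 v) _) hc
  have h2 := dot2_nonneg hv hq
  rw [dot2_add_right]
  exact le_add_of_le_of_nonneg h1 h2

lemma newton_convex (f : MvPowerSeries (Fin 2) ℂ) : Convex ℝ (newtonPoly f) :=
  (convex_convexHull ℝ _).add convex_quadrant2

lemma mem_newton {f : MvPowerSeries (Fin 2) ℂ} {p : ℝ × ℝ} (hp : p ∈ psupp f) :
    p ∈ newtonPoly f := by
  have := Set.add_mem_add (subset_convexHull ℝ _ hp)
    (show (0:ℝ×ℝ) ∈ quadrant2 from ⟨le_refl 0, le_refl 0⟩)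
  simpa [newtonPoly] using this

lemma newton_add_quad {f : MvPowerSeries (Fin 2) ℂ} {u : ℝ × ℝ} (hu : u ∈ newtonPoly f)
    {q : ℝ × ℝ} (hq : q ∈ quadrant2) : u + q ∈ newtonPoly f := by
  obtain ⟨c, hc, r, hr, rfl⟩ := Set.mem_add.mp hu
  have := Set.add_mem_add hc (quadrant2_add hr hq)
  simpa [newtonPoly, add_assoc] using this

end helpers

section cone

variable {f : MvPowerSeries (Fin 2) ℂ} {xi : ℝ}

lemma coneC_lb (hxi : 0 < xi) {v : ℝ × ℝ} (hv : v ∈ quadrant2) {u : ℝ × ℝ}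
    (hu : u ∈ xi • newtonPoly f) : xi * ordV v f ≤ dot2 v u := by
  obtain ⟨w, hw, rfl⟩ := Set.mem_smul_set.mp hu
  rw [dot2_smul_right]
  exact mul_le_mul_of_nonneg_left (ordV_le_newton hv hw) hxi.le

lemma coneC_add_quad (hxi : 0 < xi) {u : ℝ × ℝ} (hu : u ∈ xi • newtonPoly f) {q : ℝ × ℝ}
    (hq : q ∈ quadrant2) : u + q ∈ xi • newtonPoly f := by
  obtain ⟨w, hw, rfl⟩ := Set.mem_smul_set.mp hu
  refine Set.mem_smul_set.mpr ⟨w + xi⁻¹ • q, newton_add_quad hw (quadrant2_smul (inv_nonneg.mpr hxi.le) hq), ?_⟩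
  rw [smul_add, smul_inv_smul₀ hxi.ne']

lemma coneC_interior_nonempty (hxi : 0 < xi) (hf : f ≠ 0) :
    (interior (xi • newtonPoly f)).Nonempty := by
  obtain ⟨p0, hp0⟩ := psupp_nonempty hf
  have hp0C : xi • p0 ∈ xi • newtonPoly f := Set.smul_mem_smul_set (mem_newton hp0)
  set U : Set (ℝ × ℝ) := {u | (xi • p0).1 < u.1 ∧ (xi • p0).2 < u.2} with hU
  have hUopen : IsOpen U :=
    (isOpen_lt continuous_const continuous_fst).inter (isOpen_lt continuous_const continuous_snd)
  have hUsub : U ⊆ xi • newtonPoly f := by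
    intro u hu
    have : xi • p0 + (u - xi • p0) ∈ xi • newtonPoly f :=
      coneC_add_quad hxi hp0C ⟨by simpa using (sub_nonneg.mpr hu.1.le), by simpa using (sub_nonneg.mpr hu.2.le)⟩
    simpa using this
  refine ⟨(xi • p0) + (1, 1), ?_⟩
  apply interior_maximal hUsub hUopen
  constructor <;> simp

end cone

/-- 𝒩(h) + λ ⊆ Int(ξ·𝒩(f)) iff ord_v(h) + ⟨v,λ⟩ > ξ·ord_v(f) for all nonzero
v ∈ ℝ≥0². -/
theorem translated_inclusion_iff_valuations (f h : MvPowerSeries (Fin 2) ℂ)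
    (hf : f ≠ 0) (hh : h ≠ 0) (lam : ℝ × ℝ) (hlam : lam ∈ quadrant2)
    (ξ : ℚ) (hξ : 0 < ξ) :
    ((fun u => u + lam) '' newtonPoly h ⊆ interior ((ξ : ℝ) • newtonPoly f)) ↔
      ∀ v ∈ quadrant2, v ≠ 0 → (ξ : ℝ) * ordV v f < ordV v h + dot2 v lam := by
  set xi : ℝ := (ξ : ℝ) with hxidef
  have hxi : 0 < xi := by rw [hxidef]; exact_mod_cast hξ
  constructor
  · intro hinc v hv hv0
    obtain ⟨p, hp, hmin⟩ := psupp_min hh hv hv0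
    have hpN : p + lam ∈ interior (xi • newtonPoly f) :=
      hinc (Set.mem_image_of_mem _ (mem_newton hp))
    obtain ⟨ε, hε, hball⟩ := Metric.mem_nhds_iff.mp (mem_interior_iff_mem_nhds.mp hpN)
    set c : ℝ := ε / (2 * (‖v‖ + 1)) with hc
    have h1 : (0:ℝ) ≤ ‖v‖ := norm_nonneg v
    have hcpos : 0 < c := by positivity
    have hy : (p + lam) - c • v ∈ xi • newtonPoly f := by
      apply hball
      rw [Metric.mem_ball, dist_eq_norm]
      have heq : (p + lam) - c • v - (p + lam) = -(c • v) := by abel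
      rw [heq, norm_neg, norm_smul, Real.norm_eq_abs, abs_of_pos hcpos, hc,
        div_mul_eq_mul_div, div_lt_iff₀ (by positivity)]
      nlinarith
    have h2 := coneC_lb hxi hv hy
    have h3 : dot2 v ((p + lam) - c • v) = dot2 v p + dot2 v lam - c * dot2 v v := by
      have heq : (p + lam) - c • v = p + (lam + (-c) • v) := by
        rw [neg_smul]; abel
      rw [heq, dot2_add_right, dot2_add_right, dot2_smul_right]; ring
    have h4 := dot2_self_pos hv hv0
    have h5 : ordV v h = dot2 v p := ordV_eq hp hmin
    rw [h3] at h2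
    rw [h5]
    nlinarith
  · intro hval
    rintro _ ⟨w, hw, rfl⟩
    simp only
    by_contra hnot
    obtain ⟨g, hg⟩ := geometric_hahn_banach_open_point
      (((newton_convex f).smul xi).interior) isOpen_interior hnot
    set u : ℝ × ℝ := w + lam with hudef
    obtain ⟨y, hy⟩ := coneC_interior_nonempty hxi hf
    have hgle : ∀ a ∈ xi • newtonPoly f, g a ≤ g u := by
      intro a ha
      by_contra hgt
      push_neg at hgt
      have hgy : g y < g u := hg y hy
      set t : ℝ := (g a - g u) / (2 * (g a - g y)) with ht
      have hgagy : 0 < g a - g y := by linarith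
      have ht0 : 0 < t := by
        apply div_pos (by linarith) (by linarith)
      have ht1 : t ≤ 1 := by
        rw [ht, div_le_one (by linarith)]; linarith
      have hmem : (1 - t) • a + t • y ∈ interior (xi • newtonPoly f) :=
        ((newton_convex f).smul xi).combo_closure_interior_mem_interior
          (subset_closure ha) hy (by linarith) ht0 (by ring)
      have hlt := hg _ hmem
      rw [map_add, map_smul, map_smul] at hlt
      have htg : t * (g a - g y) = (g a - g u) / 2 := by
        rw [ht]; field_simp
      simp only [smul_eq_mul] at hlt
      nlinarith
    set v : ℝ × ℝ := (-(g ((1:ℝ), (0:ℝ))), -(g ((0:ℝ), (1:ℝ)))) with hvdef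
    have hgv : ∀ a : ℝ × ℝ, g a = -(dot2 v a) := by
      intro a
      have hsplit : g a = a.1 * g ((1:ℝ),(0:ℝ)) + a.2 * g ((0:ℝ),(1:ℝ)) := by
        conv_lhs => rw [show a = a.1 • ((1:ℝ),(0:ℝ)) + a.2 • ((0:ℝ),(1:ℝ)) by
          ext <;> simp]
        rw [map_add, map_smul, map_smul]; simp [smul_eq_mul]
      rw [hsplit]; simp only [hvdef, dot2]; ring
    obtain ⟨p0, hp0⟩ := psupp_nonempty hf
    have ha0 : xi • p0 ∈ xi • newtonPoly f := Set.smul_mem_smul_set (mem_newton hp0)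
    have hgrow : ∀ e ∈ quadrant2, ∀ t : ℝ, 0 ≤ t → g (xi • p0) + t * g e ≤ g u := by
      intro e he t htnn
      have := hgle _ (coneC_add_quad hxi ha0 (quadrant2_smul htnn he))
      rw [map_add, show g (t • e) = t * g e from by rw [map_smul, smul_eq_mul]] at this
      exact this
    have ha0le : g (xi • p0) ≤ g u := hgle _ ha0
    have hvq : v ∈ quadrant2 := by
      constructor
      · by_contra hneg
        push_neg at hneg
        have hge1 : g ((1:ℝ),(0:ℝ)) = -v.1 := by simp [hvdef]
        have e1q : ((1:ℝ),(0:ℝ)) ∈ quadrant2 := ⟨zero_le_one, le_refl 0⟩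
        set T : ℝ := (g u - g (xi • p0) + 1) / (-v.1) with hT
        have hTnn : 0 ≤ T := div_nonneg (by linarith) (by linarith)
        have hb := hgrow _ e1q T hTnn
        rw [hge1, hT, div_mul_cancel₀ _ (by linarith : -v.1 ≠ 0)] at hb
        linarith
      · by_contra hneg
        push_neg at hneg
        have hge2 : g ((0:ℝ),(1:ℝ)) = -v.2 := by simp [hvdef]
        have e2q : ((0:ℝ),(1:ℝ)) ∈ quadrant2 := ⟨le_refl 0, zero_le_one⟩
        set T : ℝ := (g u - g (xi • p0) + 1) / (-v.2) with hT
        have hTnn : 0 ≤ T := div_nonneg (by linarith) (by linarith)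
        have hb := hgrow _ e2q T hTnn
        rw [hge2, hT, div_mul_cancel₀ _ (by linarith : -v.2 ≠ 0)] at hb
        linarith
    have hvne : v ≠ 0 := by
      intro h0
      have hcon := hg y hy
      rw [hgv y, hgv u, h0] at hcon
      simp [dot2] at hcon
    obtain ⟨pf, hpf, hpfmin⟩ := psupp_min hf hvq hvne
    have h5 : ordV v f = dot2 v pf := ordV_eq hpf hpfmin
    have haf : xi • pf ∈ xi • newtonPoly f := Set.smul_mem_smul_set (mem_newton hpf)
    have h6 := hgle _ haf
    rw [hgv, hgv, dot2_smul_right] at h6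
    have h8 : ordV v h ≤ dot2 v w := ordV_le_newton hvq hw
    have h9 := hval v hvq hvne
    have h10 : dot2 v u = dot2 v w + dot2 v lam := dot2_add_right v w lam
    rw [h5] at h9
    linarith
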